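/- arXiv:1902.01848 — 6 statements merged into one kernel-verified Lean document; each statement's English description precedes it below -/
import Mathlib

section
/- Let S and P be symmetric matrices with ‖S − P‖₂ ≤ ε. Let U₋ be a matrix whose columns are orthonormal eigenvectors of S corresponding to eigenvalues with absolute value at most α, and V₊ a matrix whose columns are orthonormal eigenvectors of P corresponding to eigenvalues with absolute value at least β, where α < β. Then ‖U₋ᵀ V₊‖₂ ≤ ε / (β − α). -/
open Matrix
open scoped Matrix.Norms.L2Operator

lemma diag_l2_norm_le {k : ℕ} (d : Fin k → ℝ) (c : ℝ) (hc : 0 ≤ c) (h : ∀ i, |d i| ≤ c) :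
    ‖(Matrix.diagonal d : Matrix (Fin k) (Fin k) ℝ)‖ ≤ c := by
  rw [Matrix.l2_opNorm_def]
  refine ContinuousLinearMap.opNorm_le_bound _ hc fun x => ?_
  have hle : ‖Matrix.toEuclideanLin (Matrix.diagonal d) x‖ ^ 2 ≤ (c * ‖x‖) ^ 2 := by
    have hx2 : ‖x‖ ^ 2 = ∑ i, ‖x i‖ ^ 2 := by
      rw [EuclideanSpace.norm_eq, Real.sq_sqrt (by positivity)]
    rw [EuclideanSpace.norm_eq, Real.sq_sqrt (by positivity), mul_pow, hx2, Finset.mul_sum]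
    refine Finset.sum_le_sum fun i _ => ?_
    have hi : Matrix.toEuclideanLin (Matrix.diagonal d) x i = d i * x i := by
      show (Matrix.diagonal d *ᵥ fun a => x a) i = d i * x i
      rw [Matrix.mulVec_diagonal]
    rw [hi]
    have h1 : ‖d i * x i‖ ≤ c * ‖x i‖ := by
      rw [norm_mul]
      exact mul_le_mul_of_nonneg_right (by simpa using h i) (norm_nonneg _)
    calc ‖d i * x i‖ ^ 2 ≤ (c * ‖x i‖) ^ 2 := pow_le_pow_left₀ (norm_nonneg _) h1 2
      _ = c ^ 2 * ‖x i‖ ^ 2 := by ring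
  exact (pow_le_pow_iff_left₀ (norm_nonneg _) (by positivity) two_ne_zero).mp hle

lemma orth_l2_norm_le {n k : ℕ} (U : Matrix (Fin n) (Fin k) ℝ) (hU : Uᵀ * U = 1) :
    ‖U‖ ≤ 1 := by
  have hH : Uᴴ = Uᵀ := by ext i j; simp
  have h1 : ‖U‖ * ‖U‖ = ‖(1 : Matrix (Fin k) (Fin k) ℝ)‖ := by
    rw [← Matrix.l2_opNorm_conjTranspose_mul_self, hH, hU]
  have h2 : ‖(1 : Matrix (Fin k) (Fin k) ℝ)‖ ≤ 1 := by
    rw [show (1 : Matrix (Fin k) (Fin k) ℝ) = Matrix.diagonal (fun _ => 1) by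
      simp [Matrix.diagonal_one]]
    exact diag_l2_norm_le _ 1 zero_le_one fun i => by simp
  nlinarith [norm_nonneg U]

/-- Gap-free Wedin-type theorem: if `S`, `P` are symmetric with `‖S − P‖₂ ≤ ε`,
`U` has orthonormal columns that are eigenvectors of `S` with eigenvalues of
absolute value at most `α`, and `V` has orthonormal columns that are eigenvectors
of `P` with eigenvalues of absolute value at least `β > α`, then
`‖Uᵀ V‖₂ ≤ ε / (β − α)`. -/
theorem gap_free_wedin {n k₁ k₂ : ℕ} (S P : Matrix (Fin n) (Fin n) ℝ)
    (hS : S.IsSymm) (hP : P.IsSymm) (ε α β : ℝ) (hαβ : α < β)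
    (hdiff : ‖S - P‖ ≤ ε)
    (U : Matrix (Fin n) (Fin k₁) ℝ) (V : Matrix (Fin n) (Fin k₂) ℝ)
    (μ : Fin k₁ → ℝ) (ν : Fin k₂ → ℝ)
    (hUorth : Uᵀ * U = 1) (hVorth : Vᵀ * V = 1)
    (hUeig : ∀ j, S.mulVec (fun i => U i j) = μ j • (fun i => U i j))
    (hVeig : ∀ j, P.mulVec (fun i => V i j) = ν j • (fun i => V i j))
    (hμ : ∀ j, |μ j| ≤ α) (hν : ∀ j, β ≤ |ν j|) :
    ‖Uᵀ * V‖ ≤ ε / (β - α) := by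
  have hε : 0 ≤ ε := le_trans (norm_nonneg _) hdiff
  have hβα : 0 < β - α := by linarith
  have hrhs : 0 ≤ ε / (β - α) := div_nonneg hε hβα.le
  -- trivial cases
  rcases Nat.eq_zero_or_pos k₁ with hk₁ | hk₁
  · subst hk₁
    have : Uᵀ * V = 0 := by ext i j; exact i.elim0
    rw [this, norm_zero]; exact hrhs
  rcases Nat.eq_zero_or_pos k₂ with hk₂ | hk₂
  · subst hk₂
    have : Uᵀ * V = 0 := by ext i j; exact j.elim0
    rw [this, norm_zero]; exact hrhs
  -- main case
  have hα : 0 ≤ α := le_trans (abs_nonneg _) (hμ ⟨0, hk₁⟩)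
  have hβ : 0 < β := lt_of_le_of_lt hα hαβ
  have hνne : ∀ j, ν j ≠ 0 := fun j hj => by
    have := hν j; rw [hj, abs_zero] at this; linarith
  set M := Uᵀ * V with hM
  set E := Uᵀ * (S - P) * V with hE
  set Dμ := Matrix.diagonal μ with hDμ
  set Dν := Matrix.diagonal ν with hDν
  -- Uᵀ * S = Dμ * Uᵀ
  have hsym : ∀ a b, S a b = S b a := fun a b => by
    conv_lhs => rw [← hS]
    exact Matrix.transpose_apply S a b
  have hUS : Uᵀ * S = Dμ * Uᵀ := by
    ext i b
    have heig := congrFun (hUeig i) b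
    simp only [Matrix.mulVec, dotProduct, Pi.smul_apply, smul_eq_mul] at heig
    have hd : (Dμ * Uᵀ) i b = μ i * U b i := by
      rw [hDμ, Matrix.diagonal_mul, Matrix.transpose_apply]
    rw [hd, ← heig]
    simp only [Matrix.mul_apply, Matrix.transpose_apply]
    exact Finset.sum_congr rfl fun a _ => by rw [mul_comm, hsym a b]
  -- P * V = V * Dν
  have hPV : P * V = V * Dν := by
    ext a j
    have := congrFun (hVeig j) a
    simp only [Matrix.mulVec, dotProduct, Pi.smul_apply, smul_eq_mul] at this
    have hd : (V * Dν) a j = V a j * ν j := by rw [hDν, Matrix.mul_diagonal]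
    rw [hd]
    simp only [Matrix.mul_apply]
    rw [this, mul_comm]
  have key : E = Dμ * M - M * Dν := by
    rw [hE, hM, Matrix.mul_sub, Matrix.sub_mul, hUS, Matrix.mul_assoc Uᵀ P V, hPV,
      Matrix.mul_assoc Dμ Uᵀ V, ← Matrix.mul_assoc Uᵀ V Dν]
  -- invert Dν
  set Dνinv := Matrix.diagonal (fun j => (ν j)⁻¹) with hDνinv
  have hinv : Dν * Dνinv = 1 := by
    rw [hDν, hDνinv, Matrix.diagonal_mul_diagonal]
    rw [show (fun j => ν j * (ν j)⁻¹) = fun _ => (1:ℝ) from funext fun j =>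
      mul_inv_cancel₀ (hνne j)]
    exact Matrix.diagonal_one
  have hMeq : M = (Dμ * M - E) * Dνinv := by
    have hkey2 : M * Dν = Dμ * M - E := by rw [key]; abel
    calc M = M * (Dν * Dνinv) := by rw [hinv, Matrix.mul_one]
      _ = (M * Dν) * Dνinv := (Matrix.mul_assoc M Dν Dνinv).symm
      _ = (Dμ * M - E) * Dνinv := by rw [hkey2]
  -- norm bounds
  have hDμn : ‖Dμ‖ ≤ α := diag_l2_norm_le μ α hα hμ
  have hDνinvn : ‖Dνinv‖ ≤ β⁻¹ := by
    refine diag_l2_norm_le _ β⁻¹ (by positivity) fun j => ?_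
    rw [abs_inv]
    exact inv_anti₀ hβ (hν j)
  have hUn : ‖Uᵀ‖ ≤ 1 := by
    have : Uᵀᴴ = U := by ext i j; simp
    calc ‖Uᵀ‖ = ‖Uᵀᴴ‖ := (Matrix.l2_opNorm_conjTranspose _).symm
      _ = ‖U‖ := by rw [this]
      _ ≤ 1 := orth_l2_norm_le U hUorth
  have hVn : ‖V‖ ≤ 1 := orth_l2_norm_le V hVorth
  have hEn : ‖E‖ ≤ ε := by
    calc ‖E‖ ≤ ‖Uᵀ * (S - P)‖ * ‖V‖ := Matrix.l2_opNorm_mul _ _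
      _ ≤ ‖Uᵀ‖ * ‖S - P‖ * ‖V‖ :=
        mul_le_mul_of_nonneg_right (Matrix.l2_opNorm_mul _ _) (norm_nonneg _)
      _ ≤ 1 * ε * 1 := by
        apply mul_le_mul _ hVn (norm_nonneg _) (by positivity)
        exact mul_le_mul hUn hdiff (norm_nonneg _) zero_le_one
      _ = ε := by ring
  have hMn : ‖M‖ ≤ (α * ‖M‖ + ε) * β⁻¹ := by
    calc ‖M‖ = ‖(Dμ * M - E) * Dνinv‖ := by rw [← hMeq]
      _ ≤ ‖Dμ * M - E‖ * ‖Dνinv‖ := Matrix.l2_opNorm_mul _ _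
      _ ≤ (α * ‖M‖ + ε) * β⁻¹ := by
        apply mul_le_mul _ hDνinvn (norm_nonneg _) _
        · calc ‖Dμ * M - E‖ ≤ ‖Dμ * M‖ + ‖E‖ := norm_sub_le _ _
            _ ≤ α * ‖M‖ + ε := by
              gcongr
              calc ‖Dμ * M‖ ≤ ‖Dμ‖ * ‖M‖ := Matrix.l2_opNorm_mul _ _
                _ ≤ α * ‖M‖ := mul_le_mul_of_nonneg_right hDμn (norm_nonneg _)
        · positivity
  have hβM : β * ‖M‖ ≤ α * ‖M‖ + ε := by
    have h2 := mul_le_mul_of_nonneg_left hMn hβ.le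
    calc β * ‖M‖ ≤ β * ((α * ‖M‖ + ε) * β⁻¹) := h2
      _ = α * ‖M‖ + ε := by field_simp
  rw [le_div_iff₀ hβα]
  nlinarith
end

section
/- Let S, P be symmetric matrices with ‖S − P‖₂ ≤ ε, and suppose all eigenvalues of S in an index block K₂ equal the common value σ_s > 0. Let U^S_{K₂} be the orthonormal eigenvectors of S for that eigenvalue, and U^P_{K₋₂} orthonormal eigenvectors of P corresponding to eigenvalues equal to −σ_s(P) (i.e., the negated block). Then ‖(U^S_{K₂})ᵀ U^P_{K₋₂}‖₂ ≤ ε / (σ_s(S) + σ_s(P)). -/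
open Matrix
open scoped Matrix.Norms.L2Operator

/-- Cross-term bound for the repeated-singular-value block: if `S`, `P` are
symmetric with `‖S − P‖₂ ≤ ε`, the columns of `U` are orthonormal eigenvectors
of `S` all with the common eigenvalue `σS > 0`, and the columns of `W` are
orthonormal eigenvectors of `P` with eigenvalue `−σP` (the negated block),
then `‖Uᵀ W‖₂ ≤ ε / (σS + σP)`. -/
theorem repeated_block_cross_bound {n k₁ k₂ : ℕ} (S P : Matrix (Fin n) (Fin n) ℝ)
    (hS : S.IsSymm) (hP : P.IsSymm) (ε σS σP : ℝ)
    (hσS : 0 < σS) (hσP : 0 ≤ σP)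
    (hdiff : ‖S - P‖ ≤ ε)
    (U : Matrix (Fin n) (Fin k₁) ℝ) (W : Matrix (Fin n) (Fin k₂) ℝ)
    (hUorth : Uᵀ * U = 1) (hWorth : Wᵀ * W = 1)
    (hUeig : ∀ j, S.mulVec (fun i => U i j) = σS • (fun i => U i j))
    (hWeig : ∀ j, P.mulVec (fun i => W i j) = (-σP) • (fun i => W i j)) :
    ‖Uᵀ * W‖ ≤ ε / (σS + σP) := by
  have hσ : 0 < σS + σP := by linarith
  have hSU : S * U = σS • U := by
    ext i j
    have := congrFun (hUeig j) i
    simpa [Matrix.mul_apply, Matrix.mulVec, dotProduct] using this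
  have hPW : P * W = (-σP) • W := by
    ext i j
    have := congrFun (hWeig j) i
    simpa [Matrix.mul_apply, Matrix.mulVec, dotProduct] using this
  have hUS : Uᵀ * S = σS • Uᵀ := by
    calc Uᵀ * S = (Sᵀ * U)ᵀ := by rw [Matrix.transpose_mul, Matrix.transpose_transpose]
    _ = (S * U)ᵀ := by rw [hS]
    _ = σS • Uᵀ := by rw [hSU, Matrix.transpose_smul]
  have key : Uᵀ * (S - P) * W = (σS + σP) • (Uᵀ * W) := by
    rw [Matrix.mul_sub, Matrix.sub_mul, hUS, Matrix.mul_assoc, hPW,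
      Matrix.smul_mul, Matrix.mul_smul]
    module
  have hone : ∀ k : ℕ, ‖(1 : Matrix (Fin k) (Fin k) ℝ)‖ ≤ 1 := by
    intro k
    rw [Matrix.cstar_norm_def, _root_.map_one]
    rw [ContinuousLinearMap.one_def]
    exact ContinuousLinearMap.norm_id_le
  have hUT : ‖Uᵀ‖ ≤ 1 := by
    have h1 : ‖Uᴴ * U‖ = ‖U‖ * ‖U‖ := Matrix.l2_opNorm_conjTranspose_mul_self U
    rw [Matrix.conjTranspose_eq_transpose_of_trivial, hUorth] at h1
    have hU : ‖U‖ ≤ 1 := by nlinarith [norm_nonneg U, hone k₁]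
    calc ‖Uᵀ‖ = ‖Uᴴ‖ := by rw [Matrix.conjTranspose_eq_transpose_of_trivial]
    _ = ‖U‖ := Matrix.l2_opNorm_conjTranspose U
    _ ≤ 1 := hU
  have hW : ‖W‖ ≤ 1 := by
    have h1 : ‖Wᴴ * W‖ = ‖W‖ * ‖W‖ := Matrix.l2_opNorm_conjTranspose_mul_self W
    rw [Matrix.conjTranspose_eq_transpose_of_trivial, hWorth] at h1
    nlinarith [norm_nonneg W, hone k₂]
  have hmain : (σS + σP) * ‖Uᵀ * W‖ ≤ ε := by
    calc (σS + σP) * ‖Uᵀ * W‖ = ‖(σS + σP) • (Uᵀ * W)‖ := by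
          rw [norm_smul, Real.norm_of_nonneg hσ.le]
    _ = ‖Uᵀ * (S - P) * W‖ := by rw [key]
    _ ≤ ‖Uᵀ * (S - P)‖ * ‖W‖ := Matrix.l2_opNorm_mul _ _
    _ ≤ ‖Uᵀ‖ * ‖S - P‖ * ‖W‖ := by
          have := Matrix.l2_opNorm_mul Uᵀ (S - P)
          have hWnn := norm_nonneg W
          nlinarith
    _ ≤ ε := by
          have h1 : ‖Uᵀ‖ * ‖S - P‖ ≤ ‖S - P‖ := mul_le_of_le_one_left (norm_nonneg _) hUT
          have h2 : ‖Uᵀ‖ * ‖S - P‖ * ‖W‖ ≤ ‖Uᵀ‖ * ‖S - P‖ :=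
            mul_le_of_le_one_right (mul_nonneg (norm_nonneg _) (norm_nonneg _)) hW
          linarith
  rw [le_div_iff₀ hσ]
  linarith
end

section
/- Let S be an invertible n×n matrix with condition number κ = κ(S), and let N be a (1/(4κ))-net of the unit sphere S^{n−1}. Then for any matrix A, ‖S A‖₂ ≤ 2 · sup_{v ∈ N} ‖vᵀ A‖₂ / ‖vᵀ S^{-1}‖₂. -/
open Matrix
open scoped Matrix.Norms.L2Operator

set_option maxHeartbeats 1000000

noncomputable def ESV {k : ℕ} (w : Fin k → ℝ) : EuclideanSpace ℝ (Fin k) :=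
  (EuclideanSpace.equiv (Fin k) ℝ).symm w

lemma ESV_vecMul_le {n m : ℕ} (B : Matrix (Fin n) (Fin m) ℝ) (w : Fin n → ℝ) :
    ‖ESV (vecMul w B)‖ ≤ ‖B‖ * ‖ESV w‖ := by
  have h1 : Bᵀ = Bᴴ := by ext i j; simp [conjTranspose_apply]
  have := Matrix.l2_opNorm_mulVec Bᵀ (ESV w)
  rw [Matrix.mulVec_transpose] at this
  rw [h1, Matrix.l2_opNorm_conjTranspose] at this
  exact this

lemma opNorm_le_of_vecMul {n m : ℕ} (B : Matrix (Fin n) (Fin m) ℝ) (C : ℝ) (hC : 0 ≤ C)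
    (h : ∀ w : Fin n → ℝ, ‖ESV w‖ = 1 → ‖ESV (vecMul w B)‖ ≤ C) : ‖B‖ ≤ C := by
  have h1 : Bᵀ = Bᴴ := by ext i j; simp [conjTranspose_apply]
  rw [← Matrix.l2_opNorm_conjTranspose, ← h1, Matrix.l2_opNorm_def]
  apply ContinuousLinearMap.opNorm_le_of_unit_norm hC
  intro x hx
  have hfx : (Matrix.toEuclideanLin Bᵀ).toContinuousLinearMap x
      = ESV (vecMul ((EuclideanSpace.equiv (Fin n) ℝ) x) B) := by
    simp only [LinearMap.coe_toContinuousLinearMap', Matrix.toEuclideanLin_apply]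
    rw [Matrix.mulVec_transpose]
    rfl
  rw [LinearEquiv.trans_apply, hfx]
  apply h
  simpa [ESV] using hx

/-- Conditional ε-net bound (Lemma 4.1 of Simchowitz et al.): for invertible `S`
with condition number `κ = ‖S‖‖S⁻¹‖` and a `1/(4κ)`-net `N` of the unit sphere,
for any matrix `A`, `‖S A‖₂ ≤ 2 sup_{v ∈ N} ‖vᵀ A‖ / ‖vᵀ S⁻¹‖`. -/
theorem conditional_net_bound {n m : ℕ} (S : Matrix (Fin n) (Fin n) ℝ)
    (hS : IsUnit S) (A : Matrix (Fin n) (Fin m) ℝ)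
    (κ : ℝ) (hκ : κ = ‖S‖ * ‖S⁻¹‖)
    (N : Finset (EuclideanSpace ℝ (Fin n)))
    (hsphere : ∀ v ∈ N, ‖v‖ = 1)
    (hnet : ∀ x : EuclideanSpace ℝ (Fin n), ‖x‖ = 1 →
      ∃ v ∈ N, ‖x - v‖ ≤ 1 / (4 * κ)) :
    ‖S * A‖ ≤ 2 * ⨆ v ∈ N,
      ‖(EuclideanSpace.equiv (Fin m) ℝ).symm (Matrix.vecMul v A)‖ /
        ‖(EuclideanSpace.equiv (Fin n) ℝ).symm (Matrix.vecMul v S⁻¹)‖ := by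
  classical
  set f : EuclideanSpace ℝ (Fin n) → ℝ := fun v =>
    ‖(EuclideanSpace.equiv (Fin m) ℝ).symm (Matrix.vecMul v A)‖ /
      ‖(EuclideanSpace.equiv (Fin n) ℝ).symm (Matrix.vecMul v S⁻¹)‖ with hfdef
  set M : ℝ := ⨆ v, ⨆ _ : v ∈ N, f v with hMdef
  show ‖S * A‖ ≤ 2 * M
  have hf0 : ∀ v, 0 ≤ f v := fun v => div_nonneg (norm_nonneg _) (norm_nonneg _)
  have hM0 : 0 ≤ M :=
    Real.iSup_nonneg fun v => Real.iSup_nonneg fun _ => hf0 v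
  have hbdd : BddAbove (Set.range fun v => ⨆ _ : v ∈ N, f v) := by
    refine BddAbove.mono ?_ (Set.Finite.bddAbove
      (((N : Set (EuclideanSpace ℝ (Fin n))).toFinite.image f).insert 0))
    rintro y ⟨v, rfl⟩
    show (⨆ _ : v ∈ N, f v) ∈ insert (0:ℝ) (f '' ↑N)
    by_cases hv : v ∈ N
    · rw [ciSup_pos hv]
      exact Set.mem_insert_of_mem _ ⟨v, hv, rfl⟩
    · haveI : IsEmpty (v ∈ N) := ⟨hv⟩
      rw [Real.iSup_of_isEmpty]
      exact Set.mem_insert _ _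
  have hfM : ∀ v ∈ N, f v ≤ M := by
    intro v hv
    have h := le_ciSup hbdd v
    rwa [ciSup_pos hv] at h
  rcases Nat.eq_zero_or_pos n with hn | hn
  · subst hn
    have hz : S * A = 0 := Subsingleton.elim _ _
    rw [hz, norm_zero]
    linarith
  -- now n ≥ 1
  have hdet : IsUnit S.det := (Matrix.isUnit_iff_isUnit_det S).mp hS
  have hSS : S * S⁻¹ = 1 := Matrix.mul_nonsing_inv S hdet
  have hSiS : S⁻¹ * S = 1 := Matrix.nonsing_inv_mul S hdet
  haveI : Nonempty (Fin n) := ⟨⟨0, hn⟩⟩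
  have hone : (1 : Matrix (Fin n) (Fin n) ℝ) ≠ 0 := one_ne_zero
  have hSi0 : 0 < ‖S⁻¹‖ := by
    rw [norm_pos_iff]
    intro h
    rw [h, Matrix.mul_zero] at hSS
    exact hone hSS.symm
  have hS0 : 0 < ‖S‖ := by
    rw [norm_pos_iff]
    intro h
    rw [h, Matrix.zero_mul] at hSS
    exact hone hSS.symm
  have hκ1 : 1 ≤ κ := by
    rw [hκ]
    calc (1:ℝ) = ‖(1 : Matrix (Fin n) (Fin n) ℝ)‖ := norm_one.symm
    _ = ‖S * S⁻¹‖ := by rw [hSS]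
    _ ≤ ‖S‖ * ‖S⁻¹‖ := Matrix.l2_opNorm_mul S S⁻¹
  have hκ0 : 0 < κ := lt_of_lt_of_le one_pos hκ1
  set ε : ℝ := 1 / (4 * κ) with hεdef
  have hε0 : 0 < ε := by positivity
  set a : ℝ := ‖S * A‖ with hadef
  have ha0 : 0 ≤ a := norm_nonneg _
  have hA : ‖A‖ ≤ ‖S⁻¹‖ * a := by
    have : A = S⁻¹ * (S * A) := by rw [← Matrix.mul_assoc, hSiS, Matrix.one_mul]
    calc ‖A‖ = ‖S⁻¹ * (S * A)‖ := by rw [← this]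
    _ ≤ ‖S⁻¹‖ * a := Matrix.l2_opNorm_mul _ _
  have hst : ‖S‖ * ‖S⁻¹‖ = κ := hκ.symm
  have hkε : κ * ε = 1/4 := by
    rw [hεdef]; field_simp
  have key : a ≤ (5/4) * M + (1/4) * a := by
    apply opNorm_le_of_vecMul
    · nlinarith
    intro w hw
    set u : Fin n → ℝ := vecMul w S with hudef
    set c : ℝ := ‖ESV u‖ with hcdef
    have huw : vecMul u S⁻¹ = w := by
      rw [hudef, Matrix.vecMul_vecMul, hSS, Matrix.vecMul_one]
    have hc0 : 0 < c := by
      rw [hcdef, norm_pos_iff]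
      intro h
      have hu0 : u = 0 := (EuclideanSpace.equiv (Fin n) ℝ).symm.injective
        (by simpa [ESV] using h)
      rw [hu0, Matrix.zero_vecMul] at huw
      rw [← huw] at hw
      simp [ESV] at hw
    set y' : Fin n → ℝ := c⁻¹ • u with hy'def
    have hcy' : c • y' = u := smul_inv_smul₀ hc0.ne' u
    have hESsmul : ∀ (k : ℕ) (t : ℝ) (z : Fin k → ℝ), ESV (t • z) = t • ESV z := by
      intro k t z
      simp [ESV]
    have hESsub : ∀ (k : ℕ) (z₁ z₂ : Fin k → ℝ), ESV (z₁ - z₂) = ESV z₁ - ESV z₂ := by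
      intro k z₁ z₂
      simp [ESV]
    have hy1 : ‖ESV y'‖ = 1 := by
      rw [hy'def, hESsmul, norm_smul, Real.norm_eq_abs,
        abs_of_pos (inv_pos.mpr hc0), ← hcdef, inv_mul_cancel₀ hc0.ne']
    obtain ⟨v, hvN, hvy⟩ := hnet (ESV y') hy1
    have hv1 : ‖v‖ = 1 := hsphere v hvN
    set vf : Fin n → ℝ := (EuclideanSpace.equiv (Fin n) ℝ) v with hvfdef
    have hvv : ESV vf = v := (EuclideanSpace.equiv (Fin n) ℝ).symm_apply_apply v
    have hvA : Matrix.vecMul v A = Matrix.vecMul vf A := rfl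
    have hvS : Matrix.vecMul v S⁻¹ = Matrix.vecMul vf S⁻¹ := rfl
    -- denominator positive
    have hdv0 : 0 < ‖ESV (vecMul vf S⁻¹)‖ := by
      rw [norm_pos_iff]
      intro h
      have h0 : vecMul vf S⁻¹ = 0 := (EuclideanSpace.equiv (Fin n) ℝ).symm.injective
        (by simpa [ESV] using h)
      have : vf = 0 := by
        have := congrArg (fun z => vecMul z S) h0
        simpa [Matrix.vecMul_vecMul, hSiS, Matrix.vecMul_one, Matrix.zero_vecMul] using this
      rw [← hvv, this] at hv1
      simp [ESV] at hv1
    set dv : ℝ := ‖ESV (vecMul vf S⁻¹)‖ with hdvdef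
    have hfveq : f v = ‖ESV (vecMul vf A)‖ / dv := rfl
    have hfv : ‖ESV (vecMul vf A)‖ = f v * dv := by
      rw [hfveq, div_mul_cancel₀ _ hdv0.ne']
    -- c ≤ ‖S‖
    have hcS : c ≤ ‖S‖ := by
      calc c = ‖ESV (vecMul w S)‖ := rfl
      _ ≤ ‖S‖ * ‖ESV w‖ := ESV_vecMul_le S w
      _ = ‖S‖ := by rw [hw, mul_one]
    -- the approximation error pieces
    have herrA : ‖ESV (vecMul (y' - vf) A)‖ ≤ ‖A‖ * ε := by
      calc ‖ESV (vecMul (y' - vf) A)‖ ≤ ‖A‖ * ‖ESV (y' - vf)‖ := ESV_vecMul_le A _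
      _ ≤ ‖A‖ * ε := by
          apply mul_le_mul_of_nonneg_left _ (norm_nonneg A)
          rw [hESsub, hvv]
          exact hvy
    have herrS : ‖ESV (vecMul (y' - vf) S⁻¹)‖ ≤ ‖S⁻¹‖ * ε := by
      calc ‖ESV (vecMul (y' - vf) S⁻¹)‖ ≤ ‖S⁻¹‖ * ‖ESV (y' - vf)‖ := ESV_vecMul_le _ _
      _ ≤ ‖S⁻¹‖ * ε := by
          apply mul_le_mul_of_nonneg_left _ (norm_nonneg _)
          rw [hESsub, hvv]
          exact hvy
    -- c * ‖ESV (vecMul y' S⁻¹)‖ = 1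
    have hcy'S : c * ‖ESV (vecMul y' S⁻¹)‖ = 1 := by
      have : vecMul y' S⁻¹ = c⁻¹ • w := by
        rw [hy'def, Matrix.smul_vecMul, huw]
      rw [this, hESsmul, norm_smul, Real.norm_eq_abs, abs_of_pos (inv_pos.mpr hc0), hw,
        mul_one, mul_inv_cancel₀ hc0.ne']
    -- dv bound: c * dv ≤ 5/4
    have hdv : c * dv ≤ 5/4 := by
      have hsplit : vecMul vf S⁻¹ = vecMul y' S⁻¹ - vecMul (y' - vf) S⁻¹ := by
        rw [Matrix.sub_vecMul]
        abel
      have h1 : dv ≤ ‖ESV (vecMul y' S⁻¹)‖ + ‖S⁻¹‖ * ε := by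
        rw [hdvdef, hsplit, hESsub]
        calc ‖ESV (vecMul y' S⁻¹) - ESV (vecMul (y' - vf) S⁻¹)‖
            ≤ ‖ESV (vecMul y' S⁻¹)‖ + ‖ESV (vecMul (y' - vf) S⁻¹)‖ := norm_sub_le _ _
        _ ≤ ‖ESV (vecMul y' S⁻¹)‖ + ‖S⁻¹‖ * ε := by linarith
      have h2 : c * dv ≤ 1 + c * (‖S⁻¹‖ * ε) := by
        nlinarith [hc0.le, mul_le_mul_of_nonneg_left h1 hc0.le]
      have h3 : c * (‖S⁻¹‖ * ε) ≤ 1/4 := by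
        have : c * (‖S⁻¹‖ * ε) ≤ ‖S‖ * (‖S⁻¹‖ * ε) := by
          nlinarith [mul_pos hSi0 hε0]
        have hk : ‖S‖ * (‖S⁻¹‖ * ε) = 1/4 := by
          rw [← mul_assoc, hst, hkε]
        linarith
      linarith
    -- error term bound: c * (‖A‖ * ε) ≤ a/4
    have herr : c * (‖A‖ * ε) ≤ (1/4) * a := by
      have h1 : c * (‖A‖ * ε) ≤ ‖S‖ * ((‖S⁻¹‖ * a) * ε) := by
        have hAε : ‖A‖ * ε ≤ (‖S⁻¹‖ * a) * ε := mul_le_mul_of_nonneg_right hA hε0.le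
        nlinarith [mul_nonneg (norm_nonneg A) hε0.le, hS0.le]
      have h2 : ‖S‖ * ((‖S⁻¹‖ * a) * ε) = (1/4) * a := by
        calc ‖S‖ * ((‖S⁻¹‖ * a) * ε) = (‖S‖ * ‖S⁻¹‖) * ε * a := by ring
        _ = κ * ε * a := by rw [hst]
        _ = (1/4) * a := by rw [hkε]
      linarith
    -- assemble
    have hmain : ‖ESV (vecMul w (S * A))‖ = c * ‖ESV (vecMul y' A)‖ := by
      have h1 : vecMul w (S * A) = vecMul u A := by
        rw [hudef, Matrix.vecMul_vecMul]
      rw [h1, ← hcy', Matrix.smul_vecMul, hESsmul, norm_smul, Real.norm_eq_abs,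
        abs_of_pos hc0]
    have hsplitA : vecMul y' A = vecMul vf A + vecMul (y' - vf) A := by
      rw [Matrix.sub_vecMul]
      abel
    have htri : ‖ESV (vecMul y' A)‖ ≤ f v * dv + ‖A‖ * ε := by
      rw [hsplitA]
      calc ‖ESV (vecMul vf A + vecMul (y' - vf) A)‖
          ≤ ‖ESV (vecMul vf A)‖ + ‖ESV (vecMul (y' - vf) A)‖ := by
            have : ESV (vecMul vf A + vecMul (y' - vf) A)
                = ESV (vecMul vf A) + ESV (vecMul (y' - vf) A) := by simp [ESV]
            rw [this]; exact norm_add_le _ _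
      _ ≤ f v * dv + ‖A‖ * ε := by rw [hfv]; linarith
    have hfvM : f v ≤ M := hfM v hvN
    calc ‖ESV (vecMul w (S * A))‖ = c * ‖ESV (vecMul y' A)‖ := hmain
    _ ≤ c * (f v * dv + ‖A‖ * ε) := mul_le_mul_of_nonneg_left htri hc0.le
    _ = f v * (c * dv) + c * (‖A‖ * ε) := by ring
    _ ≤ f v * (5/4) + (1/4) * a := by
        have := mul_le_mul_of_nonneg_left hdv (hf0 v)
        linarith
    _ ≤ (5/4) * M + (1/4) * a := by nlinarith [hf0 v]
  linarith
end

section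
/- Let H_{d,∞,∞} denote the Hankel matrix with (i,j) block C A^{d+i+j} B, and H̄_{0,d,d} the doubly infinite matrix obtained by zero-padding the finite d×d block Hankel matrix H_{0,d,d}. Then ‖H_{d,∞,∞}‖₂ ≤ ‖H_{0,∞,∞} − H̄_{0,d,d}‖₂ ≤ √2 · ‖H_{d,∞,∞}‖₂. -/
open Matrix
open scoped Matrix.Norms.L2Operator

/-- The `d × d` (block) truncation of a doubly infinite block matrix. -/
def truncMx {p m : ℕ} (H : (ℕ × Fin p) → (ℕ × Fin m) → ℝ) (d : ℕ) :
    Matrix (Fin d × Fin p) (Fin d × Fin m) ℝ :=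
  Matrix.of fun ia jb => H ((ia.1 : ℕ), ia.2) ((jb.1 : ℕ), jb.2)

/-- The operator (`ℓ² → ℓ²`) norm of a doubly infinite block matrix, as the
supremum of the `L2` operator norms of its finite truncations. -/
noncomputable def infOpNorm {p m : ℕ} (H : (ℕ × Fin p) → (ℕ × Fin m) → ℝ) : ℝ :=
  ⨆ d : ℕ, ‖truncMx H d‖

/-- The doubly infinite block Hankel matrix of `(C, A, B)` with offset `k`:
its `(i,j)` block is `C A^(k+i+j) B`. -/
def hankelMx {n p m : ℕ} (C : Matrix (Fin p) (Fin n) ℝ)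
    (A : Matrix (Fin n) (Fin n) ℝ) (B : Matrix (Fin n) (Fin m) ℝ) (k : ℕ) :
    (ℕ × Fin p) → (ℕ × Fin m) → ℝ :=
  fun ia jb => (C * A ^ (k + ia.1 + jb.1) * B) ia.2 jb.2

/-- The zero-padding of the finite `d × d` block Hankel matrix `H_{0,d,d}` to a
doubly infinite matrix. -/
def hankelPad {n p m : ℕ} (C : Matrix (Fin p) (Fin n) ℝ)
    (A : Matrix (Fin n) (Fin n) ℝ) (B : Matrix (Fin n) (Fin m) ℝ) (d : ℕ) :
    (ℕ × Fin p) → (ℕ × Fin m) → ℝ :=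
  fun ia jb => if ia.1 < d ∧ jb.1 < d then hankelMx C A B 0 ia jb else 0


lemma sum_sq_le_of_emb {I I' : Type*} [Fintype I] [Fintype I'] (f : I → Option I')
    (hf : ∀ ⦃i₁ i₂ i'⦄, f i₁ = some i' → f i₂ = some i' → i₁ = i₂)
    (u : I → ℝ) (v : I' → ℝ) (h : ∀ i, u i = ((f i).map v).getD 0) :
    ∑ i, u i ^ 2 ≤ ∑ i', v i' ^ 2 := by
  classical
  have step1 : ∀ i, u i ^ 2 = ∑ i', if f i = some i' then v i' ^ 2 else 0 := by
    intro i
    cases hfi : f i with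
    | none => simp [h i, hfi]
    | some a => simp [h i, hfi]
  calc ∑ i, u i ^ 2 = ∑ i, ∑ i', if f i = some i' then v i' ^ 2 else 0 := by
        simp_rw [step1]
    _ = ∑ i', ∑ i, if f i = some i' then v i' ^ 2 else 0 := Finset.sum_comm
    _ ≤ ∑ i', v i' ^ 2 := by
        refine Finset.sum_le_sum fun i' _ => ?_
        rw [← Finset.sum_filter, Finset.sum_const, nsmul_eq_mul]
        have hcard : (Finset.univ.filter (fun i => f i = some i')).card ≤ 1 :=
          Finset.card_le_one.2 fun a ha b hb => hf (Finset.mem_filter.1 ha).2 (Finset.mem_filter.1 hb).2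
        calc ((Finset.univ.filter (fun i => f i = some i')).card : ℝ) * v i' ^ 2
            ≤ 1 * v i' ^ 2 := by
              apply mul_le_mul_of_nonneg_right _ (sq_nonneg _)
              exact_mod_cast hcard
          _ = v i' ^ 2 := one_mul _

lemma l2opnorm_le_bound {I J : Type*} [Fintype I] [Fintype J] [DecidableEq J]
    (A : Matrix I J ℝ) {c : ℝ} (hc : 0 ≤ c)
    (h : ∀ x : J → ℝ, Real.sqrt (∑ i, (A *ᵥ x) i ^ 2) ≤ c * Real.sqrt (∑ j, x j ^ 2)) :
    ‖A‖ ≤ c := by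
  rw [Matrix.l2_opNorm_def]
  refine ContinuousLinearMap.opNorm_le_bound _ hc fun x => ?_
  have h1 : ‖(Matrix.toEuclideanLin.trans LinearMap.toContinuousLinearMap A) x‖
      = Real.sqrt (∑ i, ((A *ᵥ (WithLp.equiv 2 (J → ℝ) x)) i) ^ 2) := by
    rw [EuclideanSpace.norm_eq]
    refine congrArg _ (Finset.sum_congr rfl fun i _ => ?_)
    rw [Real.norm_eq_abs, sq_abs]; rfl
  have h2 : ‖x‖ = Real.sqrt (∑ j, (WithLp.equiv 2 (J → ℝ) x j) ^ 2) := by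
    rw [EuclideanSpace.norm_eq]
    refine congrArg _ (Finset.sum_congr rfl fun j _ => ?_)
    rw [Real.norm_eq_abs, sq_abs]; rfl
  rw [h1, h2]; exact h _

lemma l2_mulVec_bound {I J : Type*} [Fintype I] [Fintype J] [DecidableEq J]
    (A : Matrix I J ℝ) (x : J → ℝ) :
    Real.sqrt (∑ i, (A *ᵥ x) i ^ 2) ≤ ‖A‖ * Real.sqrt (∑ j, x j ^ 2) := by
  have key := A.l2_opNorm_mulVec ((WithLp.equiv 2 (J → ℝ)).symm x)
  have h1 : ‖(EuclideanSpace.equiv I ℝ).symm (A *ᵥ ((WithLp.equiv 2 (J → ℝ)).symm x))‖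
      = Real.sqrt (∑ i, (A *ᵥ x) i ^ 2) := by
    rw [EuclideanSpace.norm_eq]
    refine congrArg _ (Finset.sum_congr rfl fun i _ => ?_)
    rw [Real.norm_eq_abs, sq_abs]; rfl
  have h2 : ‖(WithLp.equiv 2 (J → ℝ)).symm x‖ = Real.sqrt (∑ j, x j ^ 2) := by
    rw [EuclideanSpace.norm_eq]
    refine congrArg _ (Finset.sum_congr rfl fun j _ => ?_)
    rw [Real.norm_eq_abs, sq_abs]; rfl
  rw [h1, h2] at key; exact key

/-- Partial-embedding bound: if `N` is (up to zero rows/columns) a submatrix of `M`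
via injective partial maps, then `‖N‖ ≤ ‖M‖` in the `L2` operator norm. -/
lemma l2opnorm_emb {I J I' J' : Type*} [Fintype I] [Fintype J] [Fintype I'] [Fintype J']
    [DecidableEq J] [DecidableEq J']
    (M : Matrix I' J' ℝ) (N : Matrix I J ℝ) (f : I → Option I') (g : J → Option J')
    (hf : ∀ ⦃i₁ i₂ i'⦄, f i₁ = some i' → f i₂ = some i' → i₁ = i₂)
    (hg : ∀ ⦃j₁ j₂ j'⦄, g j₁ = some j' → g j₂ = some j' → j₁ = j₂)
    (hN : ∀ i j, N i j = ((f i).bind fun i' => (g j).map fun j' => M i' j').getD 0) :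
    ‖N‖ ≤ ‖M‖ := by
  classical
  refine l2opnorm_le_bound N (norm_nonneg M) fun x => ?_
  set x' : J' → ℝ := fun j' => ∑ j, if g j = some j' then x j else 0 with hx'def
  have claimA : ∀ i', (M *ᵥ x') i' = ∑ j, ((g j).map fun j' => M i' j').getD 0 * x j := by
    intro i'
    have : (M *ᵥ x') i' = ∑ j', ∑ j, if g j = some j' then M i' j' * x j else 0 := by
      simp only [mulVec, dotProduct, hx'def, Finset.mul_sum, mul_ite, mul_zero]
    rw [this, Finset.sum_comm]
    refine Finset.sum_congr rfl fun j _ => ?_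
    cases hgj : g j with
    | none => simp [hgj]
    | some t => simp [hgj]
  have claimB : ∀ i, (N *ᵥ x) i = ((f i).map fun i' => (M *ᵥ x') i').getD 0 := by
    intro i
    cases hfi : f i with
    | none => simp [mulVec, dotProduct, hN, hfi]
    | some i' =>
        simp only [hfi, Option.map_some, Option.getD_some, claimA]
        refine Finset.sum_congr rfl fun j _ => ?_
        show N i j * x j = _
        rw [hN i j, hfi]
        rfl
  have step1 : ∑ i, (N *ᵥ x) i ^ 2 ≤ ∑ i', (M *ᵥ x') i' ^ 2 :=
    sum_sq_le_of_emb f hf _ _ claimB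
  -- reverse partial map for `g`
  set g' : J' → Option J := fun j' => if h : ∃ j, g j = some j' then some h.choose else none
    with hg'def
  have hg' : ∀ ⦃j₁' j₂' j⦄, g' j₁' = some j → g' j₂' = some j → j₁' = j₂' := by
    intro j₁' j₂' j h1 h2
    simp only [hg'def] at h1 h2
    split_ifs at h1 h2 with e1 e2
    · have s1 := e1.choose_spec
      have s2 := e2.choose_spec
      rw [Option.some.injEq] at h1 h2
      rw [h1] at s1
      rw [h2] at s2
      rw [s1] at s2
      exact Option.some.inj s2
  have hx'val : ∀ j', x' j' = ((g' j').map x).getD 0 := by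
    intro j'
    simp only [hg'def]
    split_ifs with e
    · have s := e.choose_spec
      simp only [Option.map_some, Option.getD_some]
      simp only [hx'def]
      have hone : ∑ j, (if g j = some j' then x j else 0)
          = if g e.choose = some j' then x e.choose else 0 :=
        Finset.sum_eq_single e.choose (fun j _ hne => if_neg fun hgj => hne (hg hgj s))
          (fun h => absurd (Finset.mem_univ _) h)
      rw [hone, if_pos s]
    · push_neg at e
      simp only [Option.map_none, Option.getD_none, hx'def]
      exact Finset.sum_eq_zero fun j _ => if_neg (e j)
  have step2 : ∑ j', x' j' ^ 2 ≤ ∑ j, x j ^ 2 :=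
    sum_sq_le_of_emb g' hg' _ _ hx'val
  calc Real.sqrt (∑ i, (N *ᵥ x) i ^ 2)
      ≤ Real.sqrt (∑ i', (M *ᵥ x') i' ^ 2) := Real.sqrt_le_sqrt step1
    _ ≤ ‖M‖ * Real.sqrt (∑ j', x' j' ^ 2) := l2_mulVec_bound M x'
    _ ≤ ‖M‖ * Real.sqrt (∑ j, x j ^ 2) :=
        mul_le_mul_of_nonneg_left (Real.sqrt_le_sqrt step2) (norm_nonneg M)

/-- If `A` and `B` have disjoint row supports then `‖A + B‖ ≤ √(‖A‖² + ‖B‖²)`. -/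
lemma l2opnorm_add_le_of_disjoint_rows {I J : Type*} [Fintype I] [Fintype J] [DecidableEq J]
    (A B : Matrix I J ℝ) (h : ∀ i, (∀ j, A i j = 0) ∨ (∀ j, B i j = 0)) :
    ‖A + B‖ ≤ Real.sqrt (‖A‖ ^ 2 + ‖B‖ ^ 2) := by
  refine l2opnorm_le_bound _ (Real.sqrt_nonneg _) fun x => ?_
  have key : ∑ i, ((A + B) *ᵥ x) i ^ 2 = ∑ i, (A *ᵥ x) i ^ 2 + ∑ i, (B *ᵥ x) i ^ 2 := by
    rw [← Finset.sum_add_distrib]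
    refine Finset.sum_congr rfl fun i _ => ?_
    rw [add_mulVec]
    rcases h i with h0 | h0
    · have : (A *ᵥ x) i = 0 := by simp [mulVec, dotProduct, h0]
      simp [Pi.add_apply, this]
    · have : (B *ᵥ x) i = 0 := by simp [mulVec, dotProduct, h0]
      simp [Pi.add_apply, this]
  have hA := l2_mulVec_bound A x
  have hB := l2_mulVec_bound B x
  have hsA : (0:ℝ) ≤ ∑ i, (A *ᵥ x) i ^ 2 := Finset.sum_nonneg fun i _ => sq_nonneg _
  have hsB : (0:ℝ) ≤ ∑ i, (B *ᵥ x) i ^ 2 := Finset.sum_nonneg fun i _ => sq_nonneg _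
  have hA2 : ∑ i, (A *ᵥ x) i ^ 2 ≤ (‖A‖ * Real.sqrt (∑ j, x j ^ 2)) ^ 2 := by
    have h1 := pow_le_pow_left₀ (Real.sqrt_nonneg _) hA 2
    rwa [Real.sq_sqrt hsA] at h1
  have hB2 : ∑ i, (B *ᵥ x) i ^ 2 ≤ (‖B‖ * Real.sqrt (∑ j, x j ^ 2)) ^ 2 := by
    have h1 := pow_le_pow_left₀ (Real.sqrt_nonneg _) hB 2
    rwa [Real.sq_sqrt hsB] at h1
  have hsx : (0:ℝ) ≤ ∑ j, x j ^ 2 := Finset.sum_nonneg fun j _ => sq_nonneg _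
  calc Real.sqrt (∑ i, ((A + B) *ᵥ x) i ^ 2)
      ≤ Real.sqrt ((‖A‖ ^ 2 + ‖B‖ ^ 2) * (∑ j, x j ^ 2)) := by
        apply Real.sqrt_le_sqrt
        rw [key]
        calc ∑ i, (A *ᵥ x) i ^ 2 + ∑ i, (B *ᵥ x) i ^ 2
            ≤ (‖A‖ * Real.sqrt (∑ j, x j ^ 2)) ^ 2 + (‖B‖ * Real.sqrt (∑ j, x j ^ 2)) ^ 2 :=
              add_le_add hA2 hB2
          _ = (‖A‖ ^ 2 + ‖B‖ ^ 2) * (∑ j, x j ^ 2) := by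
              rw [mul_pow, mul_pow, Real.sq_sqrt hsx]; ring
    _ = Real.sqrt (‖A‖ ^ 2 + ‖B‖ ^ 2) * Real.sqrt (∑ j, x j ^ 2) := by
        rw [Real.sqrt_mul (by positivity)]

section Finite
variable {n p m : ℕ} (C : Matrix (Fin p) (Fin n) ℝ)
    (A : Matrix (Fin n) (Fin n) ℝ) (B : Matrix (Fin n) (Fin m) ℝ) (d N : ℕ)

lemma factFa :
    ‖truncMx (hankelMx C A B d) N‖ ≤
      ‖truncMx (fun ia jb => hankelMx C A B 0 ia jb - hankelPad C A B d ia jb) (N + d)‖ := by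
  refine l2opnorm_emb _ _
    (fun ia => some (⟨(ia.1 : ℕ) + d, Nat.add_lt_add_right ia.1.isLt d⟩, ia.2))
    (fun jb => some (⟨(jb.1 : ℕ), lt_of_lt_of_le jb.1.isLt (Nat.le_add_right _ _)⟩, jb.2)) ?_ ?_ ?_
  · rintro ⟨i₁, a₁⟩ ⟨i₂, a₂⟩ i' h1 h2
    dsimp only at h1 h2
    have h3 := (Option.some.inj h1).trans (Option.some.inj h2).symm
    simp only [Prod.ext_iff, Fin.ext_iff] at h3 ⊢
    omega
  · rintro ⟨j₁, b₁⟩ ⟨j₂, b₂⟩ j' h1 h2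
    dsimp only at h1 h2
    have h3 := (Option.some.inj h1).trans (Option.some.inj h2).symm
    simp only [Prod.ext_iff, Fin.ext_iff] at h3 ⊢
    omega
  · rintro ⟨i, a⟩ ⟨j, b⟩
    simp only [truncMx, hankelMx, hankelPad, Matrix.of_apply, Option.bind_some,
      Option.bind_some, Option.map_some, Option.getD_some]
    rw [if_neg (by omega)]
    rw [sub_zero]
    have he : (0 : ℕ) + ((i : ℕ) + d) + (j : ℕ) = d + (i : ℕ) + (j : ℕ) := by omega
    simp only [Fin.val_mk, he]

lemma factFb :
    ‖truncMx (fun ia jb => hankelMx C A B 0 ia jb - hankelPad C A B d ia jb) N‖ ≤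
      Real.sqrt 2 * ‖truncMx (hankelMx C A B d) N‖ := by
  set E1 : Matrix (Fin N × Fin p) (Fin N × Fin m) ℝ :=
    Matrix.of fun ia jb =>
      if d ≤ (ia.1 : ℕ) then (C * A ^ (0 + (ia.1 : ℕ) + (jb.1 : ℕ)) * B) ia.2 jb.2 else 0
    with hE1
  set E2 : Matrix (Fin N × Fin p) (Fin N × Fin m) ℝ :=
    Matrix.of fun ia jb =>
      if (ia.1 : ℕ) < d ∧ d ≤ (jb.1 : ℕ) then
        (C * A ^ (0 + (ia.1 : ℕ) + (jb.1 : ℕ)) * B) ia.2 jb.2 else 0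
    with hE2
  have hsplit : truncMx (fun ia jb => hankelMx C A B 0 ia jb - hankelPad C A B d ia jb) N
      = E1 + E2 := by
    ext ⟨i, a⟩ ⟨j, b⟩
    simp only [truncMx, hankelMx, hankelPad, Matrix.of_apply, hE1, hE2, Matrix.add_apply]
    by_cases hi : d ≤ (i : ℕ)
    · rw [if_neg (by omega), if_pos hi, if_neg (by omega)]
      ring
    · by_cases hj : d ≤ (j : ℕ)
      · rw [if_neg (by omega), if_neg (by omega), if_pos ⟨by omega, hj⟩]
        ring
      · rw [if_pos ⟨by omega, by omega⟩, if_neg (by omega), if_neg (by omega)]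
        ring
  have hd1 : ‖E1‖ ≤ ‖truncMx (hankelMx C A B d) N‖ := by
    refine l2opnorm_emb _ _
      (fun ia => if h : d ≤ (ia.1 : ℕ) then
        some (⟨(ia.1 : ℕ) - d, lt_of_le_of_lt (Nat.sub_le _ _) ia.1.isLt⟩, ia.2) else none)
      (fun jb => some jb) ?_ ?_ ?_
    · rintro ⟨i₁, a₁⟩ ⟨i₂, a₂⟩ i' h1 h2
      dsimp only at h1 h2
      split_ifs at h1 h2 with c1 c2
      have h3 := (Option.some.inj h1).trans (Option.some.inj h2).symm
      simp only [Prod.ext_iff, Fin.ext_iff] at h3 ⊢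
      omega
    · rintro ⟨j₁, b₁⟩ ⟨j₂, b₂⟩ j' h1 h2
      exact (Option.some.inj h1).trans (Option.some.inj h2).symm
    · rintro ⟨i, a⟩ ⟨j, b⟩
      by_cases hi : d ≤ (i : ℕ)
      · simp only [hE1, truncMx, hankelMx, Matrix.of_apply, dif_pos hi, if_pos hi,
          Option.bind_some, Option.bind_some, Option.map_some, Option.getD_some]
        have he : d + ((i : ℕ) - d) + (j : ℕ) = 0 + (i : ℕ) + (j : ℕ) := by omega
        simp only [Fin.val_mk, he]
      · simp only [hE1, Matrix.of_apply, dif_neg hi, if_neg hi, Option.bind_none,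
          Option.getD_none]
  have hd2 : ‖E2‖ ≤ ‖truncMx (hankelMx C A B d) N‖ := by
    refine l2opnorm_emb _ _
      (fun ia => if (ia.1 : ℕ) < d then some ia else none)
      (fun jb => if h : d ≤ (jb.1 : ℕ) then
        some (⟨(jb.1 : ℕ) - d, lt_of_le_of_lt (Nat.sub_le _ _) jb.1.isLt⟩, jb.2) else none)
      ?_ ?_ ?_
    · rintro ⟨i₁, a₁⟩ ⟨i₂, a₂⟩ i' h1 h2
      dsimp only at h1 h2
      split_ifs at h1 h2 with c1 c2
      exact (Option.some.inj h1).trans (Option.some.inj h2).symm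
    · rintro ⟨j₁, b₁⟩ ⟨j₂, b₂⟩ j' h1 h2
      dsimp only at h1 h2
      split_ifs at h1 h2 with c1 c2
      have h3 := (Option.some.inj h1).trans (Option.some.inj h2).symm
      simp only [Prod.ext_iff, Fin.ext_iff] at h3 ⊢
      omega
    · rintro ⟨i, a⟩ ⟨j, b⟩
      by_cases hi : (i : ℕ) < d
      · by_cases hj : d ≤ (j : ℕ)
        · simp only [hE2, truncMx, hankelMx, Matrix.of_apply, if_pos hi, dif_pos hj,
            if_pos (And.intro hi hj), Option.bind_some, Option.bind_some, Option.map_some,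
            Option.getD_some]
          have he : d + (i : ℕ) + ((j : ℕ) - d) = 0 + (i : ℕ) + (j : ℕ) := by omega
          simp only [Fin.val_mk, he]
        · simp only [hE2, Matrix.of_apply, if_pos hi, dif_neg hj, Option.bind_some,
            Option.map_none, Option.getD_none]
          exact if_neg (by omega)
      · simp only [hE2, Matrix.of_apply, if_neg hi, Option.bind_none, Option.getD_none]
        exact if_neg (by omega)
  have hdisj : ∀ ia, (∀ jb, E1 ia jb = 0) ∨ (∀ jb, E2 ia jb = 0) := by
    rintro ⟨i, a⟩
    by_cases hi : d ≤ (i : ℕ)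
    · right
      rintro ⟨j, b⟩
      simp only [hE2, Matrix.of_apply]
      exact if_neg (by omega)
    · left
      rintro ⟨j, b⟩
      simp only [hE1, Matrix.of_apply]
      exact if_neg hi
  rw [hsplit]
  have hH : (0:ℝ) ≤ ‖truncMx (hankelMx C A B d) N‖ := norm_nonneg _
  calc ‖E1 + E2‖ ≤ Real.sqrt (‖E1‖ ^ 2 + ‖E2‖ ^ 2) :=
        l2opnorm_add_le_of_disjoint_rows _ _ hdisj
    _ ≤ Real.sqrt (2 * ‖truncMx (hankelMx C A B d) N‖ ^ 2) := by
        apply Real.sqrt_le_sqrt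
        have e1 : ‖E1‖ ^ 2 ≤ ‖truncMx (hankelMx C A B d) N‖ ^ 2 :=
          pow_le_pow_left₀ (norm_nonneg _) hd1 2
        have e2 : ‖E2‖ ^ 2 ≤ ‖truncMx (hankelMx C A B d) N‖ ^ 2 :=
          pow_le_pow_left₀ (norm_nonneg _) hd2 2
        linarith
    _ = Real.sqrt 2 * ‖truncMx (hankelMx C A B d) N‖ := by
        rw [Real.sqrt_mul (by norm_num), Real.sqrt_sq hH]

end Finite

/-- Hankel truncation error bound:
`‖H_{d,∞,∞}‖ ≤ ‖H_{0,∞,∞} − H̄_{0,d,d}‖ ≤ √2 ‖H_{d,∞,∞}‖` for a stable system. -/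
theorem hankel_truncation_bounds {n p m : ℕ} (C : Matrix (Fin p) (Fin n) ℝ)
    (A : Matrix (Fin n) (Fin n) ℝ) (B : Matrix (Fin n) (Fin m) ℝ)
    (hstable : ∀ μ ∈ spectrum ℂ (A.map (algebraMap ℝ ℂ)), ‖μ‖ < 1) (d : ℕ) :
    infOpNorm (hankelMx C A B d) ≤
        infOpNorm (fun ia jb => hankelMx C A B 0 ia jb - hankelPad C A B d ia jb) ∧
      infOpNorm (fun ia jb => hankelMx C A B 0 ia jb - hankelPad C A B d ia jb) ≤
        Real.sqrt 2 * infOpNorm (hankelMx C A B d) := by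
  set Efun : (ℕ × Fin p) → (ℕ × Fin m) → ℝ :=
    fun ia jb => hankelMx C A B 0 ia jb - hankelPad C A B d ia jb with hEfun
  by_cases hbdd : BddAbove (Set.range fun N => ‖truncMx Efun N‖)
  · have hbddH : BddAbove (Set.range fun N => ‖truncMx (hankelMx C A B d) N‖) := by
      obtain ⟨c, hc⟩ := hbdd
      refine ⟨c, ?_⟩
      rintro - ⟨N, rfl⟩
      exact (factFa C A B d N).trans (hc (Set.mem_range_self (N + d)))
    constructor
    · refine ciSup_le fun N => ?_
      exact (factFa C A B d N).trans (le_ciSup hbdd (N + d))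
    · refine ciSup_le fun N => ?_
      refine (factFb C A B d N).trans ?_
      exact mul_le_mul_of_nonneg_left (le_ciSup hbddH N) (Real.sqrt_nonneg 2)
  · have hbddH : ¬ BddAbove (Set.range fun N => ‖truncMx (hankelMx C A B d) N‖) := by
      intro ⟨c, hc⟩
      refine hbdd ⟨Real.sqrt 2 * c, ?_⟩
      rintro - ⟨N, rfl⟩
      refine (factFb C A B d N).trans ?_
      exact mul_le_mul_of_nonneg_left (hc (Set.mem_range_self N)) (Real.sqrt_nonneg 2)
    have h1 : infOpNorm Efun = 0 := Real.iSup_of_not_bddAbove hbdd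
    have h2 : infOpNorm (hankelMx C A B d) = 0 := Real.iSup_of_not_bddAbove hbddH
    rw [hEfun] at h1
    constructor
    · rw [h1, h2]
    · rw [h1, h2, mul_zero]
end

section
/- For d₁ ≥ d₂ ≥ 1, the zero-padded truncation errors of the system Hankel matrix satisfy ‖H_{0,∞,∞} − H̄_{0,d₁,d₁}‖₂ ≤ √2 · ‖H_{0,∞,∞} − H̄_{0,d₂,d₂}‖₂. -/
set_option maxHeartbeats 1000000

open Matrix
open scoped Matrix.Norms.L2Operator

private lemma l2_norm_bound {ι κ : Type*} [Fintype ι] [Fintype κ] [DecidableEq κ]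
    (A : Matrix ι κ ℝ) {c : ℝ} (hc : 0 ≤ c)
    (h : ∀ x : κ → ℝ, ∑ i, (A *ᵥ x) i ^ 2 ≤ c ^ 2 * ∑ j, x j ^ 2) :
    ‖A‖ ≤ c := by
  rw [Matrix.l2_opNorm_def]
  refine ContinuousLinearMap.opNorm_le_bound _ hc fun x => ?_
  have happ : ‖((Matrix.toEuclideanLin (𝕜 := ℝ) (m := ι) (n := κ)) ≪≫ₗ
      LinearMap.toContinuousLinearMap) A x‖
      = Real.sqrt (∑ i, ((A *ᵥ (fun j => x j)) i) ^ 2) := by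
    rw [show ((Matrix.toEuclideanLin (𝕜 := ℝ) (m := ι) (n := κ)) ≪≫ₗ
        LinearMap.toContinuousLinearMap) A x
        = (WithLp.equiv 2 (ι → ℝ)).symm (A *ᵥ (fun j => x j)) from rfl]
    rw [EuclideanSpace.norm_eq]
    congr 1
    refine Finset.sum_congr rfl fun i _ => ?_
    rw [Real.norm_eq_abs, sq_abs]
    rfl
  have hx : ‖x‖ = Real.sqrt (∑ j, x j ^ 2) := by
    rw [EuclideanSpace.norm_eq]
    congr 1
    exact Finset.sum_congr rfl fun j _ => by rw [Real.norm_eq_abs, sq_abs]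
  rw [happ, hx]
  calc Real.sqrt (∑ i, ((A *ᵥ (fun j => x j)) i) ^ 2)
      ≤ Real.sqrt (c ^ 2 * ∑ j, x j ^ 2) := Real.sqrt_le_sqrt (h _)
    _ = c * Real.sqrt (∑ j, x j ^ 2) := by
        rw [Real.sqrt_mul (sq_nonneg c), Real.sqrt_sq hc]

private lemma l2_norm_diag_le_one {κ : Type*} [Fintype κ] [DecidableEq κ]
    (v : κ → ℝ) (hv : ∀ j, v j = 0 ∨ v j = 1) :
    ‖(Matrix.diagonal v : Matrix κ κ ℝ)‖ ≤ 1 := by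
  refine l2_norm_bound _ zero_le_one fun x => ?_
  rw [one_pow, one_mul]
  refine Finset.sum_le_sum fun j _ => ?_
  rw [Matrix.mulVec_diagonal]
  rcases hv j with h | h <;> simp [h, sq_nonneg]

private lemma l2_norm_le_frobenius {ι κ : Type*} [Fintype ι] [Fintype κ] [DecidableEq κ]
    (A : Matrix ι κ ℝ) :
    ‖A‖ ≤ Real.sqrt (∑ i, ∑ j, A i j ^ 2) := by
  have hS : (0:ℝ) ≤ ∑ i, ∑ j, A i j ^ 2 :=
    Finset.sum_nonneg fun i _ => Finset.sum_nonneg fun j _ => sq_nonneg _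
  refine l2_norm_bound _ (Real.sqrt_nonneg _) fun x => ?_
  rw [Real.sq_sqrt hS]
  calc ∑ i, (A *ᵥ x) i ^ 2
      ≤ ∑ i, (∑ j, A i j ^ 2) * ∑ j, x j ^ 2 := by
        refine Finset.sum_le_sum fun i _ => ?_
        have : (A *ᵥ x) i = ∑ j, A i j * x j := rfl
        rw [this]
        exact Finset.sum_mul_sq_le_sq_mul_sq _ _ _
    _ = (∑ i, ∑ j, A i j ^ 2) * ∑ j, x j ^ 2 := by rw [Finset.sum_mul]

private lemma sum_box_le (t : ℕ → ℕ → ℝ) (d₁ : ℕ) (ht0 : ∀ i j, 0 ≤ t i j)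
    (ht : ∀ i j, (d₁ ≤ i ∨ d₁ ≤ j) → t i j = 0) (d : ℕ) :
    ∑ i ∈ Finset.range d, ∑ j ∈ Finset.range d, t i j
      ≤ ∑ i ∈ Finset.range d₁, ∑ j ∈ Finset.range d₁, t i j := by
  set M := max d d₁ with hM
  have hsubd : Finset.range d ⊆ Finset.range M := Finset.range_subset_range.mpr (le_max_left _ _)
  have hsub1 : Finset.range d₁ ⊆ Finset.range M := Finset.range_subset_range.mpr (le_max_right _ _)
  have inner_eq : ∀ i, ∑ j ∈ Finset.range M, t i j = ∑ j ∈ Finset.range d₁, t i j := by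
    intro i
    refine (Finset.sum_subset hsub1 fun j _ hj => ?_).symm
    exact ht i j (Or.inr (Nat.le_of_not_lt (by simpa using hj)))
  calc ∑ i ∈ Finset.range d, ∑ j ∈ Finset.range d, t i j
      ≤ ∑ i ∈ Finset.range d, ∑ j ∈ Finset.range M, t i j := by
        refine Finset.sum_le_sum fun i _ => ?_
        exact Finset.sum_le_sum_of_subset_of_nonneg hsubd fun j _ _ => ht0 i j
    _ ≤ ∑ i ∈ Finset.range M, ∑ j ∈ Finset.range M, t i j :=
        Finset.sum_le_sum_of_subset_of_nonneg hsubd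
          (fun i _ _ => Finset.sum_nonneg fun j _ => ht0 i j)
    _ = ∑ i ∈ Finset.range M, ∑ j ∈ Finset.range d₁, t i j :=
        Finset.sum_congr rfl fun i _ => inner_eq i
    _ = ∑ i ∈ Finset.range d₁, ∑ j ∈ Finset.range d₁, t i j := by
        refine (Finset.sum_subset hsub1 fun i _ hi => ?_).symm
        exact Finset.sum_eq_zero fun j _ =>
          ht i j (Or.inl (Nat.le_of_not_lt (by simpa using hi)))

private lemma key_step {p m : ℕ} (H : (ℕ × Fin p) → (ℕ × Fin m) → ℝ)
    (d₁ d₂ : ℕ) (h21 : d₂ ≤ d₁) (d : ℕ) :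
    ‖truncMx (fun ia jb => if ia.1 < d₁ ∧ jb.1 < d₁ then 0 else H ia jb) d‖
      ≤ Real.sqrt 2 *
        ‖truncMx (fun ia jb => if ia.1 < d₂ ∧ jb.1 < d₂ then 0 else H ia jb) d‖ := by
  classical
  set M₁ := truncMx (fun ia jb => if ia.1 < d₁ ∧ jb.1 < d₁ then 0 else H ia jb) d with hM₁
  set M₂ := truncMx (fun ia jb => if ia.1 < d₂ ∧ jb.1 < d₂ then 0 else H ia jb) d with hM₂
  set q : Fin d × Fin m → ℝ := fun jb => if d₁ ≤ (jb.1 : ℕ) then 1 else 0 with hq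
  set q' : Fin d × Fin m → ℝ := fun jb => if (jb.1 : ℕ) < d₁ then 1 else 0 with hq'
  set pv : Fin d × Fin p → ℝ := fun ia => if d₁ ≤ (ia.1 : ℕ) then 1 else 0 with hpv
  set Q := Matrix.diagonal q with hQ
  set Q' := Matrix.diagonal q' with hQ'
  set P := Matrix.diagonal pv with hP
  have hsplit : M₁ = M₂ * Q + P * M₂ * Q' := by
    ext ia jb
    simp only [hM₁, hM₂, truncMx, Matrix.of_apply, Matrix.add_apply, Matrix.mul_diagonal,
      Matrix.diagonal_mul, hQ, hQ', hP, hq, hq', hpv]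
    rcases lt_or_ge (jb.1 : ℕ) d₁ with h2 | h2
    · rcases lt_or_ge (ia.1 : ℕ) d₁ with h1 | h1
      · simp [h1, h2, not_le.mpr h2, not_le.mpr h1]
      · have hd2 : ¬((ia.1 : ℕ) < d₂ ∧ (jb.1 : ℕ) < d₂) := by omega
        simp [h2, not_le.mpr h2, h1, hd2, not_lt.mpr h1]
    · have hd2 : ¬((ia.1 : ℕ) < d₂ ∧ (jb.1 : ℕ) < d₂) := by omega
      have hd1 : ¬((ia.1 : ℕ) < d₁ ∧ (jb.1 : ℕ) < d₁) := by omega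
      simp [h2, not_lt.mpr h2, hd1, hd2]
  have hQn : ‖Q‖ ≤ 1 :=
    l2_norm_diag_le_one q (fun j => by by_cases h : d₁ ≤ (j.1 : ℕ) <;> simp [hq, h])
  have hQ'n : ‖Q'‖ ≤ 1 :=
    l2_norm_diag_le_one q' (fun j => by by_cases h : (j.1 : ℕ) < d₁ <;> simp [hq', h])
  have hPn : ‖P‖ ≤ 1 :=
    l2_norm_diag_le_one pv (fun j => by by_cases h : d₁ ≤ (j.1 : ℕ) <;> simp [hpv, h])
  have hS₁ : ‖M₂ * Q‖ ≤ ‖M₂‖ := by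
    calc ‖M₂ * Q‖ ≤ ‖M₂‖ * ‖Q‖ := Matrix.l2_opNorm_mul _ _
      _ ≤ ‖M₂‖ * 1 := mul_le_mul_of_nonneg_left hQn (norm_nonneg _)
      _ = ‖M₂‖ := mul_one _
  have hS₂ : ‖P * M₂ * Q'‖ ≤ ‖M₂‖ := by
    calc ‖P * M₂ * Q'‖ ≤ ‖P * M₂‖ * ‖Q'‖ := Matrix.l2_opNorm_mul _ _
      _ ≤ ‖P * M₂‖ * 1 := mul_le_mul_of_nonneg_left hQ'n (norm_nonneg _)
      _ = ‖P * M₂‖ := mul_one _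
      _ ≤ ‖P‖ * ‖M₂‖ := Matrix.l2_opNorm_mul _ _
      _ ≤ 1 * ‖M₂‖ := mul_le_mul_of_nonneg_right hPn (norm_nonneg _)
      _ = ‖M₂‖ := one_mul _
  have hQQ' : Q * Q'ᴴ = 0 := by
    rw [hQ, hQ', Matrix.diagonal_conjTranspose, Matrix.diagonal_mul_diagonal]
    have hvec : ∀ i : Fin d × Fin m, q i * (star q') i = 0 := by
      intro i
      by_cases h : (i.1 : ℕ) < d₁ <;> simp [hq, hq', h, not_le.mpr, not_lt.mpr, le_of_not_gt]
    simp only [hvec]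
    exact Matrix.diagonal_zero
  have hQ'Q : Q' * Qᴴ = 0 := by
    rw [hQ, hQ', Matrix.diagonal_conjTranspose, Matrix.diagonal_mul_diagonal]
    have hvec : ∀ i : Fin d × Fin m, q' i * (star q) i = 0 := by
      intro i
      by_cases h : (i.1 : ℕ) < d₁ <;> simp [hq, hq', h, not_le.mpr, not_lt.mpr, le_of_not_gt]
    simp only [hvec]
    exact Matrix.diagonal_zero
  have h12 : (M₂ * Q) * (P * M₂ * Q')ᴴ = 0 := by
    rw [Matrix.conjTranspose_mul, Matrix.conjTranspose_mul, Matrix.mul_assoc M₂ Q,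
      ← Matrix.mul_assoc Q, hQQ', Matrix.zero_mul, Matrix.mul_zero]
  have h21' : (P * M₂ * Q') * (M₂ * Q)ᴴ = 0 := by
    rw [Matrix.conjTranspose_mul, Matrix.mul_assoc (P * M₂) Q',
      ← Matrix.mul_assoc Q', hQ'Q, Matrix.zero_mul, Matrix.mul_zero]
  have hnormsq : ∀ (N : Matrix (Fin d × Fin p) (Fin d × Fin m) ℝ), ‖N * Nᴴ‖ = ‖N‖ * ‖N‖ := by
    intro N
    have h := Matrix.l2_opNorm_conjTranspose_mul_self Nᴴ
    rw [Matrix.conjTranspose_conjTranspose] at h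
    rw [h, Matrix.l2_opNorm_conjTranspose]
  have hgram : M₁ * M₁ᴴ = (M₂ * Q) * (M₂ * Q)ᴴ + (P * M₂ * Q') * (P * M₂ * Q')ᴴ := by
    rw [hsplit, Matrix.conjTranspose_add, Matrix.add_mul, Matrix.mul_add, Matrix.mul_add,
      h12, h21']
    abel
  have hsq : ‖M₁‖ * ‖M₁‖ ≤ 2 * (‖M₂‖ * ‖M₂‖) := by
    rw [← hnormsq M₁, hgram]
    calc ‖(M₂ * Q) * (M₂ * Q)ᴴ + (P * M₂ * Q') * (P * M₂ * Q')ᴴ‖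
        ≤ ‖(M₂ * Q) * (M₂ * Q)ᴴ‖ + ‖(P * M₂ * Q') * (P * M₂ * Q')ᴴ‖ := norm_add_le _ _
      _ = ‖M₂ * Q‖ * ‖M₂ * Q‖ + ‖P * M₂ * Q'‖ * ‖P * M₂ * Q'‖ := by
          rw [hnormsq, hnormsq]
      _ ≤ ‖M₂‖ * ‖M₂‖ + ‖M₂‖ * ‖M₂‖ := by
          gcongr <;> first | exact norm_nonneg _ | assumption
      _ = 2 * (‖M₂‖ * ‖M₂‖) := by ring
  calc ‖M₁‖ = Real.sqrt (‖M₁‖ * ‖M₁‖) := (Real.sqrt_mul_self (norm_nonneg _)).symm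
    _ ≤ Real.sqrt (2 * (‖M₂‖ * ‖M₂‖)) := Real.sqrt_le_sqrt hsq
    _ = Real.sqrt 2 * ‖M₂‖ := by
        rw [Real.sqrt_mul (by norm_num : (0:ℝ) ≤ 2), Real.sqrt_mul_self (norm_nonneg _)]

/-- Monotonicity (up to `√2`) of Hankel truncation errors: for `d₁ ≥ d₂ ≥ 1`,
`‖H_{0,∞,∞} − H̄_{0,d₁,d₁}‖ ≤ √2 ‖H_{0,∞,∞} − H̄_{0,d₂,d₂}‖`. -/
theorem hankel_truncation_monotone {n p m : ℕ} (C : Matrix (Fin p) (Fin n) ℝ)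
    (A : Matrix (Fin n) (Fin n) ℝ) (B : Matrix (Fin n) (Fin m) ℝ)
    (hstable : ∀ μ ∈ spectrum ℂ (A.map (algebraMap ℝ ℂ)), ‖μ‖ < 1)
    (d₁ d₂ : ℕ) (h21 : d₂ ≤ d₁) (h2 : 1 ≤ d₂) :
    infOpNorm (fun ia jb => hankelMx C A B 0 ia jb - hankelPad C A B d₁ ia jb) ≤
      Real.sqrt 2 *
        infOpNorm (fun ia jb => hankelMx C A B 0 ia jb - hankelPad C A B d₂ ia jb) := by
  classical
  set H := hankelMx C A B 0 with hH
  set E : ℕ → (ℕ × Fin p) → (ℕ × Fin m) → ℝ :=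
    fun k ia jb => if ia.1 < k ∧ jb.1 < k then 0 else H ia jb with hE
  have htr : ∀ (k dd : ℕ),
      truncMx (fun ia jb => hankelMx C A B 0 ia jb - hankelPad C A B k ia jb) dd
        = truncMx (E k) dd := by
    intro k dd
    ext ia jb
    simp only [truncMx, Matrix.of_apply, hankelPad, hE, hH]
    split_ifs with h <;> simp
  set f : ℕ → ℝ := fun dd => ‖truncMx (E d₁) dd‖ with hf
  set g : ℕ → ℝ := fun dd => ‖truncMx (E d₂) dd‖ with hg
  have h1 : infOpNorm (fun ia jb => hankelMx C A B 0 ia jb - hankelPad C A B d₁ ia jb)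
      = ⨆ dd, f dd := by
    unfold infOpNorm
    exact iSup_congr fun dd => by rw [htr]
  have h2' : infOpNorm (fun ia jb => hankelMx C A B 0 ia jb - hankelPad C A B d₂ ia jb)
      = ⨆ dd, g dd := by
    unfold infOpNorm
    exact iSup_congr fun dd => by rw [htr]
  rw [h1, h2']
  have hkey : ∀ dd, f dd ≤ Real.sqrt 2 * g dd := fun dd =>
    key_step H d₁ d₂ h21 dd
  -- the difference of the two errors is supported in a fixed finite box
  set Δ : (ℕ × Fin p) → (ℕ × Fin m) → ℝ := fun ia jb => E d₂ ia jb - E d₁ ia jb with hΔ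
  have hΔ0 : ∀ ia jb, (d₁ ≤ ia.1 ∨ d₁ ≤ jb.1) → Δ ia jb = 0 := by
    intro ia jb h
    have hc1 : ¬(ia.1 < d₁ ∧ jb.1 < d₁) := by omega
    have hc2 : ¬(ia.1 < d₂ ∧ jb.1 < d₂) := by omega
    simp [hΔ, hE, hc1, hc2]
  have hdiff : ∀ dd, truncMx (E d₂) dd - truncMx (E d₁) dd = truncMx Δ dd := by
    intro dd
    ext ia jb
    simp [truncMx, hΔ]
  set t : ℕ → ℕ → ℝ := fun i j => ∑ a : Fin p, ∑ b : Fin m, (Δ (i, a) (j, b)) ^ 2 with ht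
  have ht0 : ∀ i j, 0 ≤ t i j := fun i j =>
    Finset.sum_nonneg fun a _ => Finset.sum_nonneg fun b _ => sq_nonneg _
  have htz : ∀ i j, (d₁ ≤ i ∨ d₁ ≤ j) → t i j = 0 := by
    intro i j h
    refine Finset.sum_eq_zero fun a _ => Finset.sum_eq_zero fun b _ => ?_
    rw [hΔ0 (i, a) (j, b) h]
    simp
  set K : ℝ := Real.sqrt (∑ i ∈ Finset.range d₁, ∑ j ∈ Finset.range d₁, t i j) with hK
  have hfrobd : ∀ dd, ‖truncMx Δ dd‖ ≤ K := by
    intro dd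
    refine (l2_norm_le_frobenius _).trans (Real.sqrt_le_sqrt ?_)
    have hconv : ∑ ia : Fin dd × Fin p, ∑ jb : Fin dd × Fin m, (truncMx Δ dd ia jb) ^ 2
        = ∑ i ∈ Finset.range dd, ∑ j ∈ Finset.range dd, t i j := by
      calc ∑ ia : Fin dd × Fin p, ∑ jb : Fin dd × Fin m, (truncMx Δ dd ia jb) ^ 2
          = ∑ i : Fin dd, ∑ j : Fin dd, t (i : ℕ) (j : ℕ) := by
            rw [Fintype.sum_prod_type]
            refine Finset.sum_congr rfl fun i _ => ?_
            simp only [Fintype.sum_prod_type]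
            rw [Finset.sum_comm]
            rfl
        _ = ∑ i ∈ Finset.range dd, ∑ j ∈ Finset.range dd, t i j := by
            rw [← Fin.sum_univ_eq_sum_range (fun i => ∑ j ∈ Finset.range dd, t i j) dd]
            exact Finset.sum_congr rfl fun i _ => Fin.sum_univ_eq_sum_range (t (i : ℕ)) dd
    rw [hconv]
    exact sum_box_le t d₁ ht0 htz dd
  have hrev : ∀ dd, g dd ≤ f dd + K := by
    intro dd
    have e : truncMx (E d₁) dd + (truncMx (E d₂) dd - truncMx (E d₁) dd)
        = truncMx (E d₂) dd := by abel
    calc g dd = ‖truncMx (E d₁) dd + (truncMx (E d₂) dd - truncMx (E d₁) dd)‖ := by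
          rw [e]
      _ ≤ ‖truncMx (E d₁) dd‖ + ‖truncMx (E d₂) dd - truncMx (E d₁) dd‖ := norm_add_le _ _
      _ ≤ f dd + K := by
          refine add_le_add le_rfl ?_
          rw [hdiff]
          exact hfrobd dd
  by_cases hbdd : BddAbove (Set.range g)
  · refine ciSup_le fun dd => (hkey dd).trans ?_
    exact mul_le_mul_of_nonneg_left (le_ciSup hbdd dd) (Real.sqrt_nonneg 2)
  · have hfub : ¬ BddAbove (Set.range f) := by
      rintro ⟨Mf, hMf⟩
      refine hbdd ⟨Mf + K, ?_⟩
      rintro x ⟨dd, rfl⟩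
      exact (hrev dd).trans (add_le_add_left (hMf ⟨dd, rfl⟩) K)
    rw [Real.iSup_of_not_bddAbove hfub, Real.iSup_of_not_bddAbove hbdd, mul_zero]
end

section
/- Consider the order-n system M₁ with A₁ the n×n companion-type matrix having ones on the superdiagonal and −a in the (n,1) entry (all other entries zero), B₁ = e_n, C₁ = e_nᵀ, and the order-2 system M₂ with A₂ = [[0,0],[1,0]], B₂ = e₂ = (0,1)ᵀ, C₂ = B₂ᵀ. If n·a < 1, then the H∞-norm of the difference satisfies ‖M₁ − M₂‖_∞ ≤ 2 n a. -/
open Matrix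
open scoped Matrix.Norms.L2Operator

noncomputable def Ninv (n : ℕ) (a : ℝ) (z : ℂ) : Matrix (Fin n) (Fin n) ℂ :=
  Matrix.of fun i k =>
    z ^ ((i : ℕ) + (n - 1 - (k : ℕ))) / (z ^ n + (a : ℂ)) -
      (if (k : ℕ) < (i : ℕ) then z ^ ((i : ℕ) - (k : ℕ) - 1) else 0)

lemma mul_Ninv (n : ℕ) (hn : 0 < n) (a : ℝ) (z : ℂ) (hd : z ^ n + (a : ℂ) ≠ 0) :
    (z • (1 : Matrix (Fin n) (Fin n) ℂ) -
      (Matrix.of fun (i j : Fin n) =>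
        if (i : ℕ) + 1 = (j : ℕ) then (1 : ℝ)
        else if (i : ℕ) = n - 1 ∧ (j : ℕ) = 0 then -a else 0).map (algebraMap ℝ ℂ)) *
      Ninv n a z = 1 := by
  ext i k
  rw [Matrix.mul_apply]
  have hsum : ∀ j : Fin n,
      ((z • (1 : Matrix (Fin n) (Fin n) ℂ) -
        (Matrix.of fun (i j : Fin n) =>
          if (i : ℕ) + 1 = (j : ℕ) then (1 : ℝ)
          else if (i : ℕ) = n - 1 ∧ (j : ℕ) = 0 then -a else 0).map (algebraMap ℝ ℂ)) i j)
      = (if i = j then z else 0) -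
        ((if (i : ℕ) + 1 = (j : ℕ) then (1 : ℂ)
          else if (i : ℕ) = n - 1 ∧ (j : ℕ) = 0 then -(a:ℂ) else 0)) := by
    intro j
    simp only [Matrix.sub_apply, Matrix.smul_apply, Matrix.one_apply, Matrix.map_apply,
      Matrix.of_apply, smul_eq_mul, mul_ite, mul_one, mul_zero]
    split_ifs <;> simp
  simp only [hsum, sub_mul, ite_mul, zero_mul, one_mul, Finset.sum_sub_distrib,
    Finset.sum_ite_eq, Finset.mem_univ, if_true]
  rcases lt_or_eq_of_le (Nat.le_sub_one_of_lt i.isLt) with hi | hi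
  · -- i < n - 1
    have hne : ¬ ((i : ℕ) = n - 1) := by omega
    have hi1 : (i : ℕ) + 1 < n := by omega
    have hrw : ∀ j : Fin n,
        (if (i : ℕ) + 1 = (j : ℕ) then Ninv n a z j k
          else if (i : ℕ) = n - 1 ∧ (j : ℕ) = 0 then -(a:ℂ) * Ninv n a z j k else 0)
        = if (⟨(i : ℕ) + 1, hi1⟩ : Fin n) = j then Ninv n a z j k else 0 := by
      intro j
      by_cases h : (i : ℕ) + 1 = (j : ℕ)
      · rw [if_pos h, if_pos (by exact Fin.ext h)]
      · rw [if_neg h, if_neg (fun hc : _ ∧ _ => hne hc.1),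
          if_neg (fun hj => h (by simpa [Fin.ext_iff] using hj))]
    rw [Finset.sum_congr rfl fun j _ => hrw j, Finset.sum_ite_eq, if_pos (Finset.mem_univ _)]
    simp only [Ninv, Matrix.of_apply, Matrix.one_apply]
    set m : ℕ := n - 1 - (k : ℕ) with hm
    rcases lt_trichotomy (k : ℕ) (i : ℕ) with h | h | h
    · rw [if_pos h, if_pos (by omega), if_neg (by simp [Fin.ext_iff]; omega)]
      have e1 : (i : ℕ) + 1 + m = ((i : ℕ) + m) + 1 := by omega
      have e2 : (i : ℕ) + 1 - (k : ℕ) - 1 = ((i : ℕ) - (k : ℕ) - 1) + 1 := by omega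
      rw [e1, e2, pow_succ, pow_succ]
      ring
    · rw [if_neg (by omega), if_pos (by omega), if_pos (by simp [Fin.ext_iff]; omega)]
      have e1 : (i : ℕ) + 1 + m = ((i : ℕ) + m) + 1 := by omega
      have e2 : (i : ℕ) + 1 - (k : ℕ) - 1 = 0 := by omega
      rw [e1, e2, pow_succ, pow_zero]
      ring
    · rw [if_neg (by omega), if_neg (by omega), if_neg (by simp [Fin.ext_iff]; omega)]
      have e1 : (i : ℕ) + 1 + m = ((i : ℕ) + m) + 1 := by omega
      rw [e1, pow_succ]
      ring
  · -- i = n - 1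
    have h0 : (0 : ℕ) < n := hn
    have hrw : ∀ j : Fin n,
        (if (i : ℕ) + 1 = (j : ℕ) then Ninv n a z j k
          else if (i : ℕ) = n - 1 ∧ (j : ℕ) = 0 then -(a:ℂ) * Ninv n a z j k else 0)
        = if (⟨0, h0⟩ : Fin n) = j then -(a:ℂ) * Ninv n a z j k else 0 := by
      intro j
      have hne : ¬ ((i : ℕ) + 1 = (j : ℕ)) := by omega
      rw [if_neg hne]
      by_cases h : (j : ℕ) = 0
      · rw [if_pos ⟨hi, h⟩, if_pos (by exact Fin.ext h.symm)]
      · rw [if_neg (fun hc => h hc.2), if_neg (fun hj => h (by simpa [Fin.ext_iff, eq_comm] using hj))]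
    rw [Finset.sum_congr rfl fun j _ => hrw j, Finset.sum_ite_eq, if_pos (Finset.mem_univ _)]
    simp only [Ninv, Matrix.of_apply, Matrix.one_apply]
    set m : ℕ := n - 1 - (k : ℕ) with hm
    simp only [Nat.not_lt_zero, if_false, sub_zero, zero_add]
    have hknk : (k : ℕ) ≤ n - 1 := Nat.le_sub_one_of_lt k.isLt
    have hz : z * z ^ ((i : ℕ) + m) = z ^ n * z ^ m := by
      rw [← pow_succ', show (i : ℕ) + m + 1 = n + m from by omega, pow_add]
    rcases lt_or_eq_of_le hknk with h | h
    · have hki : (k : ℕ) < (i : ℕ) := by omega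
      rw [if_pos hki, if_neg (by simp [Fin.ext_iff]; omega)]
      have e2 : (i : ℕ) - (k : ℕ) - 1 = m - 1 := by omega
      have hm1 : m - 1 + 1 = m := by omega
      have hz2 : z * z ^ ((i : ℕ) - (k : ℕ) - 1) = z ^ m := by
        rw [e2, ← pow_succ', hm1]
      rw [mul_sub, ← mul_div_assoc, hz, hz2]
      field_simp
      ring
    · have hki : ¬ ((k : ℕ) < (i : ℕ)) := by omega
      rw [if_neg hki, if_pos (by simp [Fin.ext_iff]; omega)]
      have hm0 : m = 0 := by omega
      rw [mul_sub, mul_zero, sub_zero, ← mul_div_assoc, hz, hm0, pow_zero]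
      field_simp
      ring

lemma mul_Ninv2 (z : ℂ) (hz : z ≠ 0) :
    (z • (1 : Matrix (Fin 2) (Fin 2) ℂ) -
      (!![0,0;1,0] : Matrix (Fin 2) (Fin 2) ℝ).map (algebraMap ℝ ℂ)) *
      !![z⁻¹, 0; z⁻¹*z⁻¹, z⁻¹] = 1 := by
  ext i j
  fin_cases i <;> fin_cases j <;>
    simp [Matrix.mul_apply, Fin.sum_univ_succ, Matrix.one_apply, Matrix.smul_apply] <;>
    field_simp <;> simp

lemma one_by_one_norm (c : ℂ) :
    ‖(Matrix.of fun (_ _ : Fin 1) => c : Matrix (Fin 1) (Fin 1) ℂ)‖ = ‖c‖ := by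
  have h1 : (Matrix.of fun (_ _ : Fin 1) => c : Matrix (Fin 1) (Fin 1) ℂ) = c • 1 := by
    ext i j
    fin_cases i; fin_cases j; simp
  rw [h1, norm_smul]
  have : ‖(1 : Matrix (Fin 1) (Fin 1) ℂ)‖ = 1 := by
    rw [Matrix.cstar_norm_def, _root_.map_one]
    exact ContinuousLinearMap.norm_id
  rw [this, mul_one]

/-- Example: the order-`n` companion-type system `M₁` (superdiagonal ones,
`(n,1)` entry `−a`, `B₁ = e_n`, `C₁ = e_nᵀ`) is approximated by the order-2
system `M₂` (`A₂ = [[0,0],[1,0]]`, `B₂ = e₂`, `C₂ = B₂ᵀ`): if `n a < 1`, then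
`‖M₁ − M₂‖_∞ = sup_ω ‖G₁(e^{iω}) − G₂(e^{iω})‖ ≤ 2 n a`. -/
theorem low_order_approximation_example (n : ℕ) (a : ℝ)
    (hn : 20 < n) (ha : 0 < a) (hna : (n : ℝ) * a < 1)
    (A₁ : Matrix (Fin n) (Fin n) ℝ)
    (hA₁ : A₁ = Matrix.of fun (i j : Fin n) =>
      if (i : ℕ) + 1 = (j : ℕ) then (1 : ℝ)
      else if (i : ℕ) = n - 1 ∧ (j : ℕ) = 0 then -a else 0)
    (B₁ : Matrix (Fin n) (Fin 1) ℝ)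
    (hB₁ : B₁ = Matrix.of fun (i : Fin n) (_ : Fin 1) => if (i : ℕ) = n - 1 then (1 : ℝ) else 0)
    (A₂ : Matrix (Fin 2) (Fin 2) ℝ) (hA₂ : A₂ = !![0, 0; 1, 0])
    (B₂ : Matrix (Fin 2) (Fin 1) ℝ) (hB₂ : B₂ = !![0; 1]) :
    (⨆ ω : ℝ,
      ‖(B₁ᵀ.map (algebraMap ℝ ℂ)) *
          (Complex.exp (ω * Complex.I) • (1 : Matrix (Fin n) (Fin n) ℂ) -
            A₁.map (algebraMap ℝ ℂ))⁻¹ * (B₁.map (algebraMap ℝ ℂ)) -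
        (B₂ᵀ.map (algebraMap ℝ ℂ)) *
          (Complex.exp (ω * Complex.I) • (1 : Matrix (Fin 2) (Fin 2) ℂ) -
            A₂.map (algebraMap ℝ ℂ))⁻¹ * (B₂.map (algebraMap ℝ ℂ))‖) ≤
      2 * (n : ℝ) * a := by
  subst hA₁ hB₁ hA₂ hB₂
  have hn1 : (21 : ℝ) ≤ (n : ℝ) := by exact_mod_cast hn
  have ha1 : a < 1 / 20 := by nlinarith
  apply ciSup_le
  intro ω
  set z : ℂ := Complex.exp (ω * Complex.I) with hzdef
  have hz1 : ‖z‖ = 1 := Complex.norm_exp_ofReal_mul_I ω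
  have hz0 : z ≠ 0 := by
    intro h; rw [h] at hz1; simp at hz1
  have hd : z ^ n + (a : ℂ) ≠ 0 := by
    intro h
    have h2 : z ^ n = -(a : ℂ) := by linear_combination h
    have h3 : ‖z ^ n‖ = a := by
      rw [h2]; simp [abs_of_pos ha]
    rw [norm_pow, hz1, one_pow] at h3
    linarith
  have hnpos : 0 < n := by omega
  have hinv1 : (z • (1 : Matrix (Fin n) (Fin n) ℂ) -
      (Matrix.of fun (i j : Fin n) =>
        if (i : ℕ) + 1 = (j : ℕ) then (1 : ℝ)
        else if (i : ℕ) = n - 1 ∧ (j : ℕ) = 0 then -a else 0).map (algebraMap ℝ ℂ))⁻¹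
      = Ninv n a z :=
    inv_eq_right_inv (mul_Ninv n hnpos a z hd)
  have hinv2 : (z • (1 : Matrix (Fin 2) (Fin 2) ℂ) -
      (!![0,0;1,0] : Matrix (Fin 2) (Fin 2) ℝ).map (algebraMap ℝ ℂ))⁻¹
      = !![z⁻¹, 0; z⁻¹*z⁻¹, z⁻¹] :=
    inv_eq_right_inv (mul_Ninv2 z hz0)
  rw [hinv1, hinv2]
  have hp : n - 1 < n := by omega
  set p : Fin n := ⟨n - 1, hp⟩ with hpdef
  -- the Fin n sum picker
  have hsum1 : ∀ (g : Fin n → ℂ),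
      (∑ jx : Fin n, if (jx : ℕ) = n - 1 then g jx else 0) = g p := by
    intro g
    rw [Finset.sum_eq_single_of_mem p (Finset.mem_univ p)]
    · rw [if_pos rfl]
    · intro b _ hb
      exact if_neg (fun h => hb (Fin.ext h))
  -- compute first sandwich
  have hE1 : ((Matrix.of fun (i : Fin n) (_ : Fin 1) =>
        if (i : ℕ) = n - 1 then (1 : ℝ) else 0)ᵀ.map (algebraMap ℝ ℂ)) * Ninv n a z *
      ((Matrix.of fun (i : Fin n) (_ : Fin 1) =>
        if (i : ℕ) = n - 1 then (1 : ℝ) else 0).map (algebraMap ℝ ℂ))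
      = Matrix.of fun (_ _ : Fin 1) => Ninv n a z p p := by
    ext i j
    simp only [Matrix.mul_apply, Matrix.map_apply, Matrix.transpose_apply, Matrix.of_apply,
      apply_ite (algebraMap ℝ ℂ), _root_.map_one, _root_.map_zero, ite_mul, one_mul, zero_mul,
      mul_ite, mul_one, mul_zero, hsum1]
  -- compute second sandwich
  have hE2 : ((!![0;1] : Matrix (Fin 2) (Fin 1) ℝ)ᵀ.map (algebraMap ℝ ℂ)) *
      !![z⁻¹, 0; z⁻¹*z⁻¹, z⁻¹] * ((!![0;1] : Matrix (Fin 2) (Fin 1) ℝ).map (algebraMap ℝ ℂ))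
      = Matrix.of fun (_ _ : Fin 1) => z⁻¹ := by
    ext i j
    fin_cases i; fin_cases j
    simp [Matrix.mul_apply, Fin.sum_univ_succ]
  rw [hE1, hE2]
  have hdiff : (Matrix.of fun (_ _ : Fin 1) => Ninv n a z p p) -
      (Matrix.of fun (_ _ : Fin 1) => z⁻¹)
      = Matrix.of fun (_ _ : Fin 1) => (-(a : ℂ) / (z * (z ^ n + (a : ℂ)))) := by
    ext i j
    simp only [Matrix.sub_apply, Matrix.of_apply, Ninv]
    simp only [Nat.sub_self, Nat.add_zero, lt_irrefl, if_false, sub_zero]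
    have hpow : z ^ (n - 1) * z = z ^ n := by
      rw [← pow_succ, show n - 1 + 1 = n from by omega]
    rw [inv_eq_one_div, div_sub_div _ _ hd hz0,
      show (p : ℕ) + (n - 1 - (p : ℕ)) = n - 1 from by simp [hpdef], hpow]
    rw [show z ^ n - (z ^ n + (a : ℂ)) * 1 = -(a : ℂ) from by ring,
      mul_comm (z ^ n + (a : ℂ)) z]
  rw [hdiff, one_by_one_norm]
  have hdl : 1 - a ≤ ‖z ^ n + (a : ℂ)‖ := by
    have h1 : ‖(z ^ n + (a : ℂ)) - (a : ℂ)‖ ≤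
        ‖z ^ n + (a : ℂ)‖ + ‖(a : ℂ)‖ := by
      exact (norm_sub_le _ _)
    simp only [add_sub_cancel_right, norm_pow, hz1, one_pow] at h1
    have h2 : ‖(a : ℂ)‖ = a := by simp [abs_of_pos ha]
    rw [h2] at h1
    linarith
  have hnorm : ‖(-(a : ℂ) / (z * (z ^ n + (a : ℂ))))‖ =
      a / ‖z ^ n + (a : ℂ)‖ := by
    rw [norm_div, norm_neg, norm_mul, hz1, one_mul]
    congr 1
    simp [abs_of_pos ha]
  rw [hnorm]
  have habs : 0 < ‖z ^ n + (a : ℂ)‖ := by linarith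
  rw [div_le_iff₀ habs]
  nlinarith [mul_pos ha habs]
end
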